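/- Let H be a real vector space, A : H → ℝⁿ a linear map, and Q a symmetric bilinear form on H. For every subspace V ⊆ H, the set ℒ(V) = {(ξ, A v) : ξ ∈ (ℝⁿ)*, v ∈ V, and ξ(A w) + Q(v, w) = 0 for all w ∈ V} is an isotropic subspace of Σ = (ℝⁿ)* × ℝⁿ with the symplectic form σ((ξ, x), (η, y)) = ξ(y) − η(x); if moreover V is finite-dimensional, then ℒ(V) is a Lagrangian subspace of Σ (i.e. isotropic of dimension n). -/

import Mathlib

open Module Submodule

/-- The standard symplectic form `σ((ξ, x), (η, y)) = ξ y - η x` on `(ℝⁿ)* × ℝⁿ`. -/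
noncomputable def dualSymp (n : ℕ) :
    (Module.Dual ℝ (Fin n → ℝ) × (Fin n → ℝ)) →ₗ[ℝ]
      (Module.Dual ℝ (Fin n → ℝ) × (Fin n → ℝ)) →ₗ[ℝ] ℝ :=
  LinearMap.mk₂ ℝ (fun p q => p.1 q.2 - q.1 p.2)
    (fun p p' q => by
      simp only [Prod.fst_add, Prod.snd_add, map_add, LinearMap.add_apply]; ring)
    (fun c p q => by
      simp only [Prod.smul_fst, Prod.smul_snd, map_smul, LinearMap.smul_apply,
        smul_eq_mul]; ring)
    (fun p q q' => by
      simp only [Prod.fst_add, Prod.snd_add, map_add, LinearMap.add_apply]; ring)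
    (fun c p q => by
      simp only [Prod.smul_fst, Prod.smul_snd, map_smul, LinearMap.smul_apply,
        smul_eq_mul]; ring)

/-- The L-derivative over a space of variations `V`: all pairs `(ξ, A v)` with `v ∈ V`
such that `ξ (A w) + Q v w = 0` for all `w ∈ V`. -/
noncomputable def Lderiv {H : Type*} [AddCommGroup H] [Module ℝ H] {n : ℕ}
    (A : H →ₗ[ℝ] (Fin n → ℝ)) (Q : H →ₗ[ℝ] H →ₗ[ℝ] ℝ) (V : Submodule ℝ H) :
    Submodule ℝ (Module.Dual ℝ (Fin n → ℝ) × (Fin n → ℝ)) where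
  carrier := {p | ∃ v ∈ V, A v = p.2 ∧ ∀ w ∈ V, p.1 (A w) + Q v w = 0}
  zero_mem' := ⟨0, V.zero_mem, by simp, by intro w hw; simp⟩
  add_mem' := by
    rintro p q ⟨v, hv, hAv, hev⟩ ⟨u, hu, hAu, heu⟩
    refine ⟨v + u, V.add_mem hv hu, ?_, ?_⟩
    · simp only [map_add, hAv, hAu, Prod.snd_add]
    · intro w hw
      have h1 := hev w hw
      have h2 := heu w hw
      simp only [Prod.fst_add, LinearMap.add_apply, map_add]
      linarith
  smul_mem' := by
    rintro c p ⟨v, hv, hAv, hev⟩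
    refine ⟨c • v, V.smul_mem c hv, ?_, ?_⟩
    · simp only [map_smul, hAv, Prod.smul_snd]
    · intro w hw
      have h1 := hev w hw
      simp only [Prod.smul_fst, LinearMap.smul_apply, map_smul, smul_eq_mul]
      rw [← mul_add, h1, mul_zero]

private lemma finrank_map_add_aux {K M N : Type*} [Field K] [AddCommGroup M] [Module K M]
    [AddCommGroup N] [Module K N] (f : M →ₗ[K] N) (p : Submodule K M)
    [FiniteDimensional K p] :
    Module.finrank K (Submodule.map f p) + Module.finrank K ↥(LinearMap.ker f ⊓ p) =
      Module.finrank K p := by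
  set g := f.comp p.subtype with hg
  have h1 : LinearMap.range g = Submodule.map f p := by
    rw [hg, LinearMap.range_comp, Submodule.range_subtype]
  have h2 : LinearMap.ker g = Submodule.comap p.subtype (LinearMap.ker f ⊓ p) := by
    rw [hg, LinearMap.ker_comp, Submodule.comap_inf, Submodule.comap_subtype_self]
    simp
  have h3 : Module.finrank K (LinearMap.ker g) = Module.finrank K ↥(LinearMap.ker f ⊓ p) := by
    rw [h2]
    exact LinearEquiv.finrank_eq (Submodule.comapSubtypeEquivOfLe inf_le_right)
  have h4 := LinearMap.finrank_range_add_finrank_ker g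
  rw [h1, h3] at h4
  exact h4

/- STATEMENT 15 -/
set_option maxHeartbeats 1000000 in
set_option synthInstance.maxHeartbeats 400000 in
theorem stmt_15 {H : Type*} [AddCommGroup H] [Module ℝ H] {n : ℕ}
    (A : H →ₗ[ℝ] (Fin n → ℝ)) (Q : H →ₗ[ℝ] H →ₗ[ℝ] ℝ)
    (hQ : ∀ x y : H, Q x y = Q y x) (V : Submodule ℝ H) :
    (∀ p ∈ Lderiv A Q V, ∀ q ∈ Lderiv A Q V, dualSymp n p q = 0) ∧
    (FiniteDimensional ℝ ↥V → Module.finrank ℝ ↥(Lderiv A Q V) = n) := by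
  constructor
  · rintro p ⟨v, hv, hAv, hev⟩ q ⟨u, hu, hAu, heu⟩
    have h1 := hev u hu
    have h2 := heu v hv
    simp only [dualSymp, LinearMap.mk₂_apply, ← hAv, ← hAu]
    have := hQ v u
    linarith
  · intro hV
    haveI := hV
    set d := Module.finrank ℝ V with hd
    set A' : V →ₗ[ℝ] (Fin n → ℝ) := A.comp V.subtype with hA'
    set R : V →ₗ[ℝ] Module.Dual ℝ V := Q.compl₁₂ V.subtype V.subtype with hR
    set ψ : (Module.Dual ℝ (Fin n → ℝ) × V) →ₗ[ℝ]
        (Module.Dual ℝ (Fin n → ℝ) × (Fin n → ℝ)) :=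
      LinearMap.prodMap LinearMap.id A' with hψ
    set T : (Module.Dual ℝ (Fin n → ℝ) × V) →ₗ[ℝ] Module.Dual ℝ V :=
      (A'.dualMap).coprod R with hT
    set N : Submodule ℝ V := LinearMap.ker A' with hN
    -- Lderiv is the image of ker T under ψ
    have hLd : Lderiv A Q V = Submodule.map ψ (LinearMap.ker T) := by
      ext p
      constructor
      · rintro ⟨v, hv, hAv, hev⟩
        refine ⟨(p.1, ⟨v, hv⟩), ?_, ?_⟩
        · show T (p.1, ⟨v, hv⟩) = 0
          ext w
          have := hev w w.2
          simpa [hT, hA', hR, LinearMap.compl₁₂_apply] using this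
        · show (p.1, A' ⟨v, hv⟩) = p
          exact Prod.ext rfl hAv
      · rintro ⟨⟨ξ, v⟩, hker, rfl⟩
        have hker' : T (ξ, v) = 0 := hker
        refine ⟨v, v.2, rfl, ?_⟩
        intro w hw
        have := DFunLike.congr_fun hker' ⟨w, hw⟩
        simpa [hψ, hT, hA', hR, LinearMap.compl₁₂_apply] using this
    -- the kernel of ψ restricted to ker T
    have hker_inf : LinearMap.ker ψ ⊓ LinearMap.ker T =
        Submodule.map (LinearMap.inr ℝ (Module.Dual ℝ (Fin n → ℝ)) V)
          (N ⊓ LinearMap.ker R) := by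
      ext ⟨ξ, v⟩
      simp only [Submodule.mem_inf, LinearMap.mem_ker, Submodule.mem_map,
        LinearMap.coe_inr, Prod.mk.injEq]
      constructor
      · rintro ⟨hψ0, hT0⟩
        have hξ : ξ = 0 := congrArg Prod.fst hψ0
        have hv : A' v = 0 := congrArg Prod.snd hψ0
        refine ⟨v, ⟨⟨hv, ?_⟩, hξ.symm, rfl⟩⟩
        have : A'.dualMap ξ + R v = 0 := hT0
        rw [hξ] at this
        simpa using this
      · rintro ⟨u, ⟨hu1, hu2⟩, rfl, rfl⟩
        refine ⟨?_, ?_⟩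
        · show ((0 : Module.Dual ℝ (Fin n → ℝ)), A' u) = 0
          exact Prod.ext rfl (LinearMap.mem_ker.mp hu1)
        · show A'.dualMap 0 + R u = 0
          simp [hu2]
    -- range of T
    have hrange : LinearMap.range T = N.dualAnnihilator ⊔ LinearMap.range R := by
      rw [hT, LinearMap.range_coprod, A'.range_dualMap_eq_dualAnnihilator_ker]
    -- the key duality step, using symmetry of Q
    have hcoann : (N.dualAnnihilator ⊔ LinearMap.range R).dualCoannihilator =
        N ⊓ LinearMap.ker R := by
      rw [Submodule.dualCoannihilator_sup_eq, Subspace.dualAnnihilator_dualCoannihilator_eq]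
      congr 1
      ext v
      simp only [Submodule.mem_dualCoannihilator, LinearMap.mem_ker]
      constructor
      · intro h
        ext w
        have := h (R w) ⟨w, rfl⟩
        simpa [hR, LinearMap.compl₁₂_apply, hQ v w] using this
      · rintro h φ ⟨u, rfl⟩
        have : R v u = 0 := by rw [h]; rfl
        simpa [hR, LinearMap.compl₁₂_apply, hQ u v] using this
    have key : Module.finrank ℝ ↥(N.dualAnnihilator ⊔ LinearMap.range R) +
        Module.finrank ℝ ↥(N ⊓ LinearMap.ker R) = d := by
      rw [← hcoann]
      exact Subspace.finrank_add_finrank_dualCoannihilator_eq _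
    -- rank-nullity for T
    have hdom : Module.finrank ℝ (Module.Dual ℝ (Fin n → ℝ) × V) = n + d := by
      rw [Module.finrank_prod, Subspace.dual_finrank_eq, Module.finrank_fin_fun]
    have hT_rn : Module.finrank ℝ ↥(LinearMap.range T) +
        Module.finrank ℝ ↥(LinearMap.ker T) = n + d := by
      rw [← hdom]; exact LinearMap.finrank_range_add_finrank_ker T
    -- dimension of Lderiv via the restricted map
    have hdim := finrank_map_add_aux ψ (LinearMap.ker T)
    have hinf_rank : Module.finrank ℝ ↥(LinearMap.ker ψ ⊓ LinearMap.ker T) =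
        Module.finrank ℝ ↥(N ⊓ LinearMap.ker R) := by
      rw [hker_inf]
      exact (LinearEquiv.finrank_eq
        (Submodule.equivMapOfInjective _ LinearMap.inr_injective _)).symm
    rw [hLd]
    rw [hrange] at hT_rn
    rw [hinf_rank] at hdim
    omega
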